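/- Let E be a complex Hilbert space and let ψ, ψ' : Fin N → E be two orthonormal families such that the overlap matrix F, defined by F n m := ⟪ψ n, ψ' m⟫, has det F ≠ 0. Then there exists a family of continuous linear operators P(α) : E →L[ℂ] E, depending continuously (in operator norm) on α ∈ [0,1], such that: each P(α) is an orthogonal projection (P(α)² = P(α) and P(α) is self-adjoint) whose range has dimension N; P(0) is the orthogonal projection onto the span of {ψ n}; and P(1) is the orthogonal projection onto the span of {ψ' m}. (Two band insulators with nonvanishing Bloch-wavefunction overlap are adiabatically connected without closing the gap.) -/

import Mathlib

open scoped InnerProductSpace Matrix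

section AdiabaticAux
variable {E : Type*} [NormedAddCommGroup E] [InnerProductSpace ℂ E] {N : ℕ}

/-- Gram matrix of a finite family of vectors. -/
noncomputable def gramAux (w : Fin N → E) : Matrix (Fin N) (Fin N) ℂ :=
  Matrix.of fun n m => ⟪w n, w m⟫_ℂ

/-- The orthogonal projection onto the span of `w` (when the Gram matrix is invertible). -/
noncomputable def projAux (w : Fin N → E) : E →L[ℂ] E :=
  ∑ n, ∑ m, (gramAux w)⁻¹ n m • (innerSL ℂ (w m)).smulRight (w n)

lemma projAux_apply (w : Fin N → E) (x : E) :
    projAux w x = ∑ n, ∑ m, (gramAux w)⁻¹ n m • (⟪w m, x⟫_ℂ • w n) := by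
  simp [projAux, ContinuousLinearMap.sum_apply]

lemma gramAux_det_ne_zero {w : Fin N → E} (hw : LinearIndependent ℂ w) :
    (gramAux w).det ≠ 0 := by
  intro h
  obtain ⟨c, hc0, hc⟩ := (Matrix.exists_mulVec_eq_zero_iff).mpr h
  have hGc : ∀ n, ⟪w n, ∑ m, c m • w m⟫_ℂ = 0 := by
    intro n
    have := congrFun hc n
    simpa [Matrix.mulVec, dotProduct, gramAux, inner_sum, inner_smul_right,
      mul_comm] using this
  have hy : (∑ m, c m • w m) = 0 := by
    rw [← inner_self_eq_zero (𝕜 := ℂ)]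
    rw [sum_inner]
    simp [inner_smul_left, hGc]
  have := Fintype.linearIndependent_iff.mp hw c hy
  exact hc0 (funext this)

lemma inner_projAux {w : Fin N → E} (hd : (gramAux w).det ≠ 0) (m : Fin N) (x : E) :
    ⟪w m, projAux w x⟫_ℂ = ⟪w m, x⟫_ℂ := by
  have h1 : gramAux w * (gramAux w)⁻¹ = 1 := Matrix.mul_nonsing_inv _ (Ne.isUnit hd)
  rw [projAux_apply]
  rw [inner_sum]
  simp only [inner_sum, inner_smul_right]
  rw [Finset.sum_comm]
  have : ∀ k, (∑ n, (gramAux w)⁻¹ n k * (⟪w k, x⟫_ℂ * ⟪w m, w n⟫_ℂ))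
      = (gramAux w * (gramAux w)⁻¹) m k * ⟪w k, x⟫_ℂ := by
    intro k
    rw [Matrix.mul_apply, Finset.sum_mul]
    congr 1; ext n
    simp [gramAux]; ring
  rw [Finset.sum_congr rfl fun k _ => this k, h1]
  simp [Matrix.one_apply]

lemma projAux_apply_self {w : Fin N → E} (hd : (gramAux w).det ≠ 0) (j : Fin N) :
    projAux w (w j) = w j := by
  have h1 : (gramAux w)⁻¹ * gramAux w = 1 := Matrix.nonsing_inv_mul _ (Ne.isUnit hd)
  rw [projAux_apply]
  have : ∀ n, (∑ m, (gramAux w)⁻¹ n m • (⟪w m, w j⟫_ℂ • w n))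
      = ((gramAux w)⁻¹ * gramAux w) n j • w n := by
    intro n
    rw [Matrix.mul_apply, Finset.sum_smul]
    congr 1; ext m
    simp [gramAux, smul_smul]
  rw [Finset.sum_congr rfl fun n _ => this n, h1]
  simp [Matrix.one_apply]

lemma projAux_idem {w : Fin N → E} (hd : (gramAux w).det ≠ 0) (x : E) :
    projAux w (projAux w x) = projAux w x := by
  conv_lhs => rw [projAux_apply]
  simp only [inner_projAux hd]
  rw [← projAux_apply]

lemma projAux_symm {w : Fin N → E} (x y : E) :
    ⟪projAux w x, y⟫_ℂ = ⟪x, projAux w y⟫_ℂ := by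
  have hherm : ((gramAux w)⁻¹).IsHermitian := by
    apply Matrix.IsHermitian.inv
    ext n m
    simp [gramAux, Matrix.conjTranspose_apply, inner_conj_symm]
  rw [projAux_apply, projAux_apply, sum_inner, inner_sum]
  simp only [sum_inner, inner_sum]
  rw [Finset.sum_comm]
  congr 1; ext n
  congr 1; ext m
  rw [inner_smul_left, inner_smul_right, inner_smul_left, inner_smul_right]
  have : (starRingEnd ℂ) ((gramAux w)⁻¹ m n) = (gramAux w)⁻¹ n m := by
    conv_rhs => rw [← hherm]
    simp [Matrix.conjTranspose_apply]
  rw [this, inner_conj_symm]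
  ring

lemma range_projAux {w : Fin N → E} (hd : (gramAux w).det ≠ 0) :
    LinearMap.range (projAux w : E →ₗ[ℂ] E) = Submodule.span ℂ (Set.range w) := by
  apply le_antisymm
  · rintro x ⟨y, rfl⟩
    rw [ContinuousLinearMap.coe_coe, projAux_apply]
    refine Submodule.sum_mem _ fun n _ => Submodule.sum_mem _ fun m _ => ?_
    exact Submodule.smul_mem _ _ (Submodule.smul_mem _ _
      (Submodule.subset_span ⟨n, rfl⟩))
  · rw [Submodule.span_le]
    rintro x ⟨j, rfl⟩
    exact ⟨w j, projAux_apply_self hd j⟩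

lemma projAux_fixes_span {w : Fin N → E} (hd : (gramAux w).det ≠ 0) {z : E}
    (hz : z ∈ Submodule.span ℂ (Set.range w)) : projAux w z = z := by
  induction hz using Submodule.span_induction with
  | mem x hx => obtain ⟨j, rfl⟩ := hx; exact projAux_apply_self hd j
  | zero => simp
  | add x y _ _ hx hy => rw [map_add, hx, hy]
  | smul c x _ hx => rw [map_smul, hx]

lemma projAux_orthonormal {w : Fin N → E} (hw : Orthonormal ℂ w) (x : E) :
    projAux w x = ∑ n, ⟪w n, x⟫_ℂ • w n := by
  have hG : gramAux w = 1 := by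
    ext n m
    simp [gramAux, orthonormal_iff_ite.mp hw, Matrix.one_apply]
  rw [projAux_apply, hG, inv_one]
  congr 1; ext n
  rw [Finset.sum_eq_single n]
  · simp [Matrix.one_apply]
  · intro m _ hm; simp [Matrix.one_apply, Ne.symm hm]
  · intro h; simp at h

lemma proj_ext {P Q : E →L[ℂ] E}
    (hPs : ∀ x y, ⟪P x, y⟫_ℂ = ⟪x, P y⟫_ℂ) (hQs : ∀ x y, ⟪Q x, y⟫_ℂ = ⟪x, Q y⟫_ℂ)
    (hP2 : ∀ x, P (P x) = P x) (hQ2 : ∀ x, Q (Q x) = Q x)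
    (hQP : ∀ x, Q (P x) = P x) (hPQ : ∀ x, P (Q x) = Q x) : P = Q := by
  ext x
  have h1 : ⟪P x, Q x⟫_ℂ = ⟪Q x, Q x⟫_ℂ := by
    rw [hPs x (Q x), hPQ, ← hQ2 x, ← hQs x (Q x), hQ2]
  have h2 : ⟪Q x, P x⟫_ℂ = ⟪P x, P x⟫_ℂ := by
    rw [hQs x (P x), hQP, ← hP2 x, ← hPs x (P x), hP2]
  have : ⟪P x - Q x, P x - Q x⟫_ℂ = 0 := by
    rw [inner_sub_left, inner_sub_right, inner_sub_right, h1, h2]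
    ring
  have := inner_self_eq_zero.mp this
  exact sub_eq_zero.mp this

lemma continuousOn_projAux {s : Set ℝ} (v : ℝ → Fin N → E)
    (hv : ∀ n, Continuous fun α => v α n)
    (hd : ∀ α ∈ s, (gramAux (v α)).det ≠ 0) :
    ContinuousOn (fun α => projAux (v α)) s := by
  have hG : Continuous fun α => gramAux (v α) :=
    continuous_matrix fun i j => ((hv i).inner (hv j))
  have hdet : Continuous fun α => (gramAux (v α)).det := hG.matrix_det
  have hadj : Continuous fun α => (gramAux (v α)).adjugate := hG.matrix_adjugate
  unfold projAux
  refine continuousOn_finset_sum _ fun n _ => continuousOn_finset_sum _ fun m _ => ?_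
  refine ContinuousOn.smul (f := fun α => (gramAux (v α))⁻¹ n m)
    (g := fun α => (innerSL ℂ (v α m)).smulRight (v α n)) ?_ ?_
  · have hrw : ∀ α, (gramAux (v α))⁻¹ n m
        = ((gramAux (v α)).det)⁻¹ * (gramAux (v α)).adjugate n m := by
      intro α
      rw [Matrix.inv_def, Ring.inverse_eq_inv']
      simp
    simp only [hrw]
    exact ((hdet.continuousOn).inv₀ hd).mul (hadj.matrix_elem n m).continuousOn
  · have : Continuous fun α => (innerSL ℂ (v α m)).smulRight (v α n) := by
      exact (isBoundedBilinearMap_smulRight (𝕜 := ℂ)).continuous.comp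
        (((innerSL ℂ).continuous.comp (hv m)).prodMk (hv n))
    exact this.continuousOn

end AdiabaticAux

/-- Two band insulators with nonvanishing Bloch-wavefunction overlap are adiabatically
connected without closing the gap: there is a norm-continuous family of rank-`N`
orthogonal projections `P(α)`, `α ∈ [0,1]`, starting at the projection onto the span of
the valence-band states `ψ` and ending at the projection onto the span of `ψ'`. -/
theorem adiabatic_connection_of_overlap_det_ne_zero {E : Type*} [NormedAddCommGroup E]
    [InnerProductSpace ℂ E] [CompleteSpace E] {N : ℕ} (ψ ψ' : Fin N → E)
    (hψ : Orthonormal ℂ ψ) (hψ' : Orthonormal ℂ ψ')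
    (hdet : (Matrix.of fun n m => ⟪ψ n, ψ' m⟫_ℂ).det ≠ 0) :
    ∃ P : ℝ → E →L[ℂ] E,
      ContinuousOn P (Set.Icc (0 : ℝ) 1) ∧
      (∀ α ∈ Set.Icc (0 : ℝ) 1,
        (P α).comp (P α) = P α ∧ IsSelfAdjoint (P α) ∧
        Module.finrank ℂ (LinearMap.range (P α : E →ₗ[ℂ] E)) = N) ∧
      (∀ x : E, P 0 x = ∑ n, ⟪ψ n, x⟫_ℂ • ψ n) ∧
      (∀ x : E, P 1 x = ∑ m, ⟪ψ' m, x⟫_ℂ • ψ' m) := by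
  classical
  set Q : E →L[ℂ] E := projAux ψ' with hQdef
  have hQapp : ∀ x, Q x = ∑ m, ⟪ψ' m, x⟫_ℂ • ψ' m := projAux_orthonormal hψ'
  set v : ℝ → Fin N → E := fun α n => ((1 - α : ℝ) : ℂ) • ψ n + ((α : ℝ) : ℂ) • Q (ψ n)
    with hvdef
  -- linear independence of `v α` for `α ∈ [0,1]`
  have hlin : ∀ α ∈ Set.Icc (0 : ℝ) 1, LinearIndependent ℂ (v α) := by
    intro α hα
    rw [Fintype.linearIndependent_iff]
    intro c hc
    set x : E := ∑ n, c n • ψ n with hxdef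
    have hsum : ((1 - α : ℝ) : ℂ) • x + ((α : ℝ) : ℂ) • Q x = 0 := by
      rw [← hc]
      simp only [hvdef, smul_add]
      rw [Finset.sum_add_distrib]
      congr 1
      · rw [hxdef, Finset.smul_sum]
        exact Finset.sum_congr rfl fun n _ => (smul_comm _ _ _)
      · rw [hxdef, map_sum, Finset.smul_sum]
        refine Finset.sum_congr rfl fun n _ => ?_
        rw [map_smul, smul_comm]
    have h0 := congrArg (fun y => ⟪x, y⟫_ℂ) hsum
    simp only [inner_add_right, inner_smul_right, inner_zero_right] at h0
    set B : ℝ := ∑ m, ‖⟪ψ' m, x⟫_ℂ‖ ^ 2 with hBdef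
    have hB : ⟪x, Q x⟫_ℂ = (B : ℂ) := by
      rw [hQapp, inner_sum, hBdef]
      push_cast
      refine Finset.sum_congr rfl fun m _ => ?_
      rw [inner_smul_right, ← inner_conj_symm (ψ' m) x, RCLike.conj_mul, RCLike.norm_conj]
      norm_cast
    have hxx : ⟪x, x⟫_ℂ = ((‖x‖ ^ 2 : ℝ) : ℂ) := by
      rw [inner_self_eq_norm_sq_to_K]; norm_cast
    rw [hxx, hB] at h0
    have hreal : (1 - α) * ‖x‖ ^ 2 + α * B = 0 := by exact_mod_cast h0
    have hB0 : 0 ≤ B := Finset.sum_nonneg fun m _ => sq_nonneg _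
    have h1α : 0 ≤ 1 - α := by linarith [hα.2]
    obtain ⟨e1, e2⟩ := (add_eq_zero_iff_of_nonneg
      (mul_nonneg h1α (sq_nonneg _)) (mul_nonneg hα.1 hB0)).mp hreal
    by_cases hα1 : α = 1
    · -- use the overlap determinant
      have hBzero : B = 0 := by rw [hα1] at e2; simpa using e2
      have hinner0 : ∀ m, ⟪ψ' m, x⟫_ℂ = 0 := by
        intro m
        have := (Finset.sum_eq_zero_iff_of_nonneg
          (fun m _ => sq_nonneg ‖⟪ψ' m, x⟫_ℂ‖)).mp hBzero m (Finset.mem_univ m)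
        simpa using this
      have hM : (Matrix.of fun n m => ⟪ψ n, ψ' m⟫_ℂ)ᴴ *ᵥ c = 0 := by
        funext m
        have : ⟪ψ' m, x⟫_ℂ = ∑ n, ⟪ψ' m, ψ n⟫_ℂ * c n := by
          rw [hxdef, inner_sum]
          exact Finset.sum_congr rfl fun n _ => by rw [inner_smul_right]; ring
        have h2 := hinner0 m
        rw [this] at h2
        simpa [Matrix.mulVec, dotProduct, Matrix.conjTranspose_apply,
          inner_conj_symm] using h2
      have hdc : ((Matrix.of fun n m => ⟪ψ n, ψ' m⟫_ℂ)ᴴ).det ≠ 0 := by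
        rw [Matrix.det_conjTranspose]
        exact star_ne_zero.mpr hdet
      intro i
      exact congrFun (Matrix.eq_zero_of_mulVec_eq_zero hdc hM) i
    · -- `x = 0`
      have hx0 : x = 0 := by
        have h1α' : 1 - α ≠ 0 := by
          intro h; exact hα1 (by linarith)
        have : ‖x‖ ^ 2 = 0 := by
          rcases mul_eq_zero.mp e1 with h | h
          · exact absurd h h1α'
          · exact h
        simpa [pow_eq_zero_iff] using this
      intro i
      have := hψ.inner_right_fintype c i
      rw [← hxdef, hx0] at this
      simpa using this.symm
  have hdetα : ∀ α ∈ Set.Icc (0 : ℝ) 1, (gramAux (v α)).det ≠ 0 :=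
    fun α hα => gramAux_det_ne_zero (hlin α hα)
  have hv0 : v 0 = ψ := by funext n; simp [hvdef]
  have hv1 : v 1 = fun n => Q (ψ n) := by funext n; simp [hvdef]
  refine ⟨fun α => projAux (v α), ?_, ?_, ?_, ?_⟩
  · -- continuity
    refine continuousOn_projAux v (fun n => ?_) hdetα
    exact ((Complex.continuous_ofReal.comp (continuous_const.sub continuous_id)).smul
        continuous_const).add
      ((Complex.continuous_ofReal.comp continuous_id).smul continuous_const)
  · -- projection properties
    intro α hα
    have hd := hdetα α hα
    refine ⟨?_, ?_, ?_⟩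
    · ext x
      exact projAux_idem hd x
    · rw [ContinuousLinearMap.isSelfAdjoint_iff_isSymmetric]
      exact fun x y => projAux_symm x y
    · rw [range_projAux hd, finrank_span_eq_card (hlin α hα)]
      simp
  · -- value at 0
    intro x
    show projAux (v 0) x = _
    rw [hv0]
    exact projAux_orthonormal hψ x
  · -- value at 1
    have h1mem : (1 : ℝ) ∈ Set.Icc (0 : ℝ) 1 := ⟨zero_le_one, le_refl 1⟩
    have hd1 := hdetα 1 h1mem
    have hdQ : (gramAux ψ').det ≠ 0 := gramAux_det_ne_zero hψ'.linearIndependent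
    haveI : FiniteDimensional ℂ (Submodule.span ℂ (Set.range ψ')) :=
      FiniteDimensional.span_of_finite ℂ (Set.finite_range ψ')
    have hle : Submodule.span ℂ (Set.range (v 1)) ≤ Submodule.span ℂ (Set.range ψ') := by
      rw [Submodule.span_le]
      rintro _ ⟨n, rfl⟩
      rw [hv1]
      show Q (ψ n) ∈ Submodule.span ℂ (Set.range ψ')
      rw [hQapp]
      exact Submodule.sum_mem _ fun m _ =>
        Submodule.smul_mem _ _ (Submodule.subset_span ⟨m, rfl⟩)
    have hspan : Submodule.span ℂ (Set.range (v 1)) = Submodule.span ℂ (Set.range ψ') := by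
      refine Submodule.eq_of_le_of_finrank_eq hle ?_
      rw [finrank_span_eq_card (hlin 1 h1mem), finrank_span_eq_card hψ'.linearIndependent]
    have hPQeq : projAux (v 1) = Q := by
      refine proj_ext (fun x y => projAux_symm x y) (fun x y => projAux_symm x y)
        (projAux_idem hd1) (projAux_idem hdQ) ?_ ?_
      · intro x
        refine projAux_fixes_span hdQ ?_
        rw [← hspan, ← range_projAux hd1]
        exact ⟨x, rfl⟩
      · intro x
        refine projAux_fixes_span hd1 ?_
        rw [hspan, ← range_projAux hdQ]
        exact ⟨x, rfl⟩
    intro x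
    show projAux (v 1) x = _
    rw [hPQeq]
    exact hQapp x
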